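/- If p(x) = Πᵢ pᵢ(xᵢ) is a product distribution on X = X₁ × ⋯ × Xₙ, then there exists a potential θ (namely θ(x) = Σᵢ log pᵢ(xᵢ)) such that the perturb-max entropy bound is tight: H(p) = E_γ[ Σ_{i=1}^n γᵢ(x^γ_i) ], where x^γ = argmax_x { θ(x) + Σᵢ γᵢ(xᵢ) } with i.i.d. zero-mean Gumbel perturbations γᵢ(xᵢ). -/

import Mathlib

open MeasureTheory Real

/-- Density of the zero-mean Gumbel distribution, whose CDF is `exp (-exp (-(t + c)))`. -/
noncomputable def gumbelPDF (t : ℝ) : ℝ :=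
  Real.exp (-(t + Real.eulerMascheroniConstant)) *
    Real.exp (-Real.exp (-(t + Real.eulerMascheroniConstant)))

/-- The zero-mean Gumbel measure on `ℝ`. -/
noncomputable def gumbel : Measure ℝ :=
  MeasureTheory.volume.withDensity fun t => ENNReal.ofReal (gumbelPDF t)

section Aux
open MeasureTheory Real Set Filter


lemma abs_log_le (s : ℝ) (hs : 0 < s) : |Real.log s| ≤ s + 1/s := by
  rcases le_or_gt 1 s with h | h
  · rw [abs_of_nonneg (Real.log_nonneg h)]
    have := Real.log_le_sub_one_of_pos hs
    nlinarith [one_div_pos.2 hs]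
  · rw [abs_of_nonpos (Real.log_nonpos hs.le h.le)]
    have h2 : Real.log (1/s) ≤ 1/s - 1 := Real.log_le_sub_one_of_pos (by positivity)
    rw [one_div, Real.log_inv] at h2
    simp only [one_div]
    nlinarith

lemma integrableOn_log_mul_exp :
    IntegrableOn (fun t : ℝ => Real.log t * Real.exp (-t)) (Ioi (0:ℝ)) := by
  have h1 : IntegrableOn (fun t : ℝ => Real.exp (-t) * t ^ ((3/2:ℝ) - 1)) (Ioi 0) :=
    Real.GammaIntegral_convergent (by norm_num)
  have h2 : IntegrableOn (fun t : ℝ => Real.exp (-t) * t ^ ((1/2:ℝ) - 1)) (Ioi 0) :=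
    Real.GammaIntegral_convergent (by norm_num)
  have hb : IntegrableOn (fun t : ℝ => 2 * (Real.exp (-t) * t ^ ((3/2:ℝ) - 1))
      + 2 * (Real.exp (-t) * t ^ ((1/2:ℝ) - 1))) (Ioi 0) :=
    ((h1.const_mul 2).add (h2.const_mul 2))
  refine Integrable.mono' hb ?_ ?_
  · exact ((Real.measurable_log.mul (by fun_prop)).aestronglyMeasurable)
  · filter_upwards [ae_restrict_mem measurableSet_Ioi] with t ht
    have ht0 : (0:ℝ) < t := ht
    have hst : (0:ℝ) < Real.sqrt t := Real.sqrt_pos.2 ht0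
    have hlog : |Real.log t| ≤ 2 * (Real.sqrt t + 1 / Real.sqrt t) := by
      have := abs_log_le (Real.sqrt t) hst
      rw [show Real.log t = 2 * Real.log (Real.sqrt t) by
        rw [Real.log_sqrt ht0.le]; ring]
      calc |2 * Real.log (Real.sqrt t)| = 2 * |Real.log (Real.sqrt t)| := by
            rw [abs_mul]; norm_num
        _ ≤ 2 * (Real.sqrt t + 1/Real.sqrt t) := by linarith
    have hs32 : t ^ ((3/2:ℝ) - 1) = Real.sqrt t := by
      rw [show (3/2:ℝ) - 1 = 1/2 by norm_num, ← Real.sqrt_eq_rpow]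
    have hs12 : t ^ ((1/2:ℝ) - 1) = 1 / Real.sqrt t := by
      rw [show (1/2:ℝ) - 1 = -(1/2) by norm_num, Real.rpow_neg ht0.le, ← Real.sqrt_eq_rpow,
        one_div]
    rw [norm_mul, norm_of_nonneg (Real.exp_pos _).le, hs32, hs12]
    have hexp : (0:ℝ) < Real.exp (-t) := Real.exp_pos _
    calc ‖Real.log t‖ * Real.exp (-t) ≤ (2 * (Real.sqrt t + 1/Real.sqrt t)) * Real.exp (-t) := by
          exact mul_le_mul_of_nonneg_right hlog hexp.le
      _ = 2 * (Real.exp (-t) * Real.sqrt t) + 2 * (Real.exp (-t) * (1/Real.sqrt t)) := by ring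

lemma integral_log_mul_exp :
    ∫ t in Ioi (0:ℝ), Real.log t * Real.exp (-t) = -Real.eulerMascheroniConstant := by
  have h1 : HasDerivAt Complex.GammaIntegral
      (∫ t : ℝ in Ioi 0, (t:ℂ) ^ ((1:ℂ) - 1) * (Real.log t * Real.exp (-t))) 1 :=
    Complex.hasDerivAt_GammaIntegral (by norm_num)
  have h2 : (∫ t : ℝ in Ioi 0, (t:ℂ) ^ ((1:ℂ) - 1) * (Real.log t * Real.exp (-t)))
      = ((∫ t in Ioi (0:ℝ), Real.log t * Real.exp (-t) : ℝ) : ℂ) := by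
    rw [show ((∫ t in Ioi (0:ℝ), Real.log t * Real.exp (-t) : ℝ) : ℂ)
        = ∫ t in Ioi (0:ℝ), ((Real.log t * Real.exp (-t) : ℝ) : ℂ) from
      (integral_ofReal (𝕜 := ℂ)).symm]
    refine setIntegral_congr_fun measurableSet_Ioi fun t ht => ?_
    simp [Complex.ofReal_mul]
  rw [h2] at h1
  have h3 : Complex.Gamma =ᶠ[nhds (1:ℂ)] Complex.GammaIntegral := by
    filter_upwards [IsOpen.mem_nhds (isOpen_lt continuous_const Complex.continuous_re)
      (by norm_num : (0:ℝ) < (1:ℂ).re)] with s hs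
    exact Complex.Gamma_eq_integral hs
  have h4 : HasDerivAt Complex.Gamma
      ((∫ t in Ioi (0:ℝ), Real.log t * Real.exp (-t) : ℝ) : ℂ) 1 :=
    h1.congr_of_eventuallyEq h3
  have h5 := h4.real_of_complex
  have h6 : (fun x : ℝ => (Complex.Gamma x).re) = Real.Gamma := by
    funext x; rw [Complex.Gamma_ofReal, Complex.ofReal_re]
  rw [h6] at h5
  have h7 := h5.unique Real.hasDerivAt_Gamma_one
  simpa using h7


local notation "γc" => Real.eulerMascheroniConstant

/-- the substitution map -/
noncomputable def gphi (u : ℝ) : ℝ := -Real.log u - γc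

noncomputable def gnu : Measure ℝ :=
  (MeasureTheory.volume.restrict (Ioi (0:ℝ))).withDensity fun u => ENNReal.ofReal (Real.exp (-u))

lemma gphi_measurable : Measurable gphi := Real.measurable_log.neg.sub_const _

lemma gumbelPDF_nonneg (t : ℝ) : 0 ≤ gumbelPDF t := by
  unfold gumbelPDF; positivity

lemma gphi_image : gphi '' (Ioi (0:ℝ)) = univ := by
  apply eq_univ_of_forall
  intro t
  exact ⟨Real.exp (-(t + γc)), Real.exp_pos _, by
    simp [gphi, Real.log_exp]⟩

lemma gphi_injOn : InjOn gphi (Ioi (0:ℝ)) := by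
  intro a ha b hb h
  have : Real.log a = Real.log b := by unfold gphi at h; linarith
  exact Real.log_injOn_pos (by simpa using ha) (by simpa using hb) this

lemma gphi_hasDeriv {u : ℝ} (hu : u ∈ Ioi (0:ℝ)) :
    HasDerivWithinAt gphi (-(1/u)) (Ioi (0:ℝ)) u := by
  have : HasDerivAt gphi (-(1/u)) u := by
    have h := (Real.hasDerivAt_log (ne_of_gt (by exact hu))).neg.sub_const (γc)
    rw [one_div]; exact h
  exact this.hasDerivWithinAt

lemma gumbel_eq_map : gumbel = gnu.map gphi := by
  refine Measure.ext fun S hS => ?_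
  rw [Measure.map_apply gphi_measurable hS]
  have hps : MeasurableSet (gphi ⁻¹' S ∩ Ioi 0) :=
    (gphi_measurable hS).inter measurableSet_Ioi
  have himg : gphi '' (gphi ⁻¹' S ∩ Ioi 0) = S := by
    rw [inter_comm, Set.image_inter_preimage, gphi_image, univ_inter]
  have hcv := lintegral_image_eq_lintegral_abs_det_fderiv_mul MeasureTheory.volume hps
      (f := gphi) (f' := fun u => ContinuousLinearMap.smulRight (1 : ℝ →L[ℝ] ℝ) (-(1/u)))
      (fun x hx => (gphi_hasDeriv hx.2).hasFDerivWithinAt.mono inter_subset_right)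
      (gphi_injOn.mono inter_subset_right)
      (fun t => ENNReal.ofReal (gumbelPDF t))
  rw [himg] at hcv
  rw [gumbel, withDensity_apply _ hS, hcv]
  rw [gnu, withDensity_apply _ (gphi_measurable hS), Measure.restrict_restrict (gphi_measurable hS)]
  refine setLIntegral_congr_fun hps ?_
  intro u hu
  obtain ⟨huS, hu0 : (0:ℝ) < u⟩ := hu
  have hdet : (ContinuousLinearMap.smulRight (1 : ℝ →L[ℝ] ℝ) (-(1/u))).det = -(1/u) := by
    simpa using ContinuousLinearMap.det_toSpanSingleton (-(1/u))
  beta_reduce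
  rw [hdet]
  have h1 : |(-(1/u))| = 1/u := by rw [abs_neg, abs_of_pos (by positivity)]
  have h2 : gumbelPDF (gphi u) = u * Real.exp (-u) := by
    unfold gumbelPDF gphi
    rw [show -(-Real.log u - γc + γc) = Real.log u by ring, Real.exp_log hu0]
  rw [h1, h2, ← ENNReal.ofReal_mul (by positivity)]
  congr 1
  field_simp

section S3
open MeasureTheory Real Set Filter
open scoped ENNReal NNReal

lemma exp_neg_integrable : IntegrableOn (fun u : ℝ => Real.exp (-u)) (Ioi (0:ℝ)) := by
  simpa using exp_neg_integrableOn_Ioi 0 one_pos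

lemma gumbel_integral_eq {G : ℝ → ℝ} (hG : Measurable G) :
    ∫ t, G t ∂gumbel = ∫ u in Ioi (0:ℝ), G (gphi u) * Real.exp (-u) := by
  rw [gumbel_eq_map, integral_map gphi_measurable.aemeasurable hG.aestronglyMeasurable]
  rw [gnu, show (fun u : ℝ => ENNReal.ofReal (Real.exp (-u)))
      = (fun u : ℝ => ((Real.exp (-u)).toNNReal : ℝ≥0∞)) from rfl]
  rw [integral_withDensity_eq_integral_smul (by fun_prop) (fun u => G (gphi u))]
  refine integral_congr_ae ?_
  filter_upwards with u
  rw [NNReal.smul_def, smul_eq_mul, Real.coe_toNNReal _ (Real.exp_pos _).le, mul_comm]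

lemma gumbel_integrable_iff {G : ℝ → ℝ} (hG : Measurable G) :
    Integrable G gumbel ↔
      IntegrableOn (fun u => G (gphi u) * Real.exp (-u)) (Ioi (0:ℝ)) := by
  rw [gumbel_eq_map,
    integrable_map_measure hG.aestronglyMeasurable gphi_measurable.aemeasurable, gnu,
    integrable_withDensity_iff (by fun_prop)
      (Filter.Eventually.of_forall fun x => ENNReal.ofReal_lt_top)]
  unfold IntegrableOn Function.comp
  refine integrable_congr ?_
  filter_upwards with u
  rw [ENNReal.toReal_ofReal (Real.exp_pos _).le]

lemma gnu_apply {S : Set ℝ} (hS : MeasurableSet S) :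
    gnu S = ∫⁻ u in S ∩ Ioi (0:ℝ), ENNReal.ofReal (Real.exp (-u)) := by
  rw [gnu, withDensity_apply _ hS, Measure.restrict_restrict hS]

instance gumbel_isProbability : IsProbabilityMeasure gumbel := by
  constructor
  rw [gumbel_eq_map, Measure.map_apply gphi_measurable MeasurableSet.univ,
    Set.preimage_univ, gnu_apply MeasurableSet.univ, Set.univ_inter,
    ← ofReal_integral_eq_lintegral_ofReal exp_neg_integrable
      (Filter.Eventually.of_forall fun x => (Real.exp_pos _).le)]
  rw [integral_exp_neg_Ioi 0]
  simp

instance gumbel_noAtoms : NullSingletonClass gumbel := by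
  constructor
  intro x
  have : gumbel {x} ≤ 0 := by
    rw [gumbel]
    have h := withDensity_absolutelyContinuous MeasureTheory.volume
      (fun t => ENNReal.ofReal (gumbelPDF t))
    exact le_of_eq (h (measure_singleton x))
  simpa using this

lemma gumbel_Iic (x : ℝ) :
    gumbel (Iic x) = ENNReal.ofReal (Real.exp (-Real.exp (-(x + Real.eulerMascheroniConstant)))) := by
  rw [gumbel_eq_map, Measure.map_apply gphi_measurable measurableSet_Iic]
  have hpre : gphi ⁻¹' (Iic x) ∩ Ioi 0 = Ici (Real.exp (-(x + Real.eulerMascheroniConstant))) := by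
    ext u
    simp only [mem_inter_iff, mem_preimage, mem_Iic, mem_Ioi, mem_Ici, gphi]
    constructor
    · rintro ⟨h1, h2⟩
      have : -(x + Real.eulerMascheroniConstant) ≤ Real.log u := by linarith
      calc Real.exp (-(x + Real.eulerMascheroniConstant)) ≤ Real.exp (Real.log u) :=
            Real.exp_le_exp.2 this
        _ = u := Real.exp_log h2
    · intro h
      have hu : 0 < u := lt_of_lt_of_le (Real.exp_pos _) h
      refine ⟨?_, hu⟩
      have := Real.log_le_log (Real.exp_pos _) h
      rw [Real.log_exp] at this
      linarith
  rw [gnu_apply (gphi_measurable measurableSet_Iic), hpre]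
  have h2 : (Ici (Real.exp (-(x + Real.eulerMascheroniConstant)))) =ᵐ[MeasureTheory.volume]
      (Ioi (Real.exp (-(x + Real.eulerMascheroniConstant))) : Set ℝ) := Ioi_ae_eq_Ici.symm
  rw [setLIntegral_congr h2,
    ← ofReal_integral_eq_lintegral_ofReal (exp_neg_integrable.mono_set (by
        intro u hu
        exact lt_trans (Real.exp_pos _) hu))
      (Filter.Eventually.of_forall fun x => (Real.exp_pos _).le),
    integral_exp_neg_Ioi]

lemma gumbel_Iio (x : ℝ) :
    gumbel (Iio x) = ENNReal.ofReal (Real.exp (-Real.exp (-(x + Real.eulerMascheroniConstant)))) := by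
  rw [← gumbel_Iic]
  exact measure_congr Iio_ae_eq_Iic

end S3

section S4
open MeasureTheory Real Set Filter
open scoped ENNReal NNReal

variable {r : ℝ}

lemma key_integrand_measurable (r : ℝ) :
    Measurable (fun t : ℝ => t * Real.exp (-((1-r)/r * Real.exp (-(t + γc))))) := by
  fun_prop

lemma key_integrableOn (hr0 : 0 < r) (hr1 : r ≤ 1) :
    IntegrableOn (fun u : ℝ => (-Real.log u - γc) * Real.exp (-(1/r) * u)) (Ioi (0:ℝ)) := by
  have hb : IntegrableOn (fun u : ℝ => |Real.log u * Real.exp (-u)|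
      + |γc| * Real.exp (-(1/r) * u)) (Ioi (0:ℝ)) :=
    integrableOn_log_mul_exp.abs.add ((exp_neg_integrableOn_Ioi 0 (by positivity)).const_mul _)
  refine Integrable.mono' hb ((Real.measurable_log.neg.sub_const γc).mul
    (by fun_prop)).aestronglyMeasurable ?_
  filter_upwards [ae_restrict_mem measurableSet_Ioi] with u hu
  have hu0 : (0:ℝ) < u := hu
  have h1 : Real.exp (-(1/r) * u) ≤ Real.exp (-u) := by
    apply Real.exp_le_exp.2
    have : 1 ≤ 1/r := (le_div_iff₀ hr0).2 (by linarith)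
    nlinarith
  have h2 : ‖(-Real.log u - γc) * Real.exp (-(1/r) * u)‖
      ≤ (|Real.log u| + |γc|) * Real.exp (-(1/r) * u) := by
    rw [norm_mul, norm_of_nonneg (Real.exp_pos _).le]
    apply mul_le_mul_of_nonneg_right _ (Real.exp_pos _).le
    calc ‖-Real.log u - γc‖ ≤ ‖-Real.log u‖ + ‖γc‖ := norm_sub_le _ _
      _ = |Real.log u| + |γc| := by rw [norm_neg]; rfl
  refine h2.trans ?_
  rw [abs_mul, abs_of_nonneg (Real.exp_pos (-u)).le]
  have := abs_nonneg (Real.log u)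
  nlinarith [Real.exp_pos (-(1/r) * u), abs_nonneg γc]

lemma aux_exp_integral (L : ℝ) :
    ∫ x in Ioi (0:ℝ), (-Real.log x - L) * Real.exp (-x)
      = Real.eulerMascheroniConstant - L := by
  have h1 : ∀ x ∈ Ioi (0:ℝ), (-Real.log x - L) * Real.exp (-x)
      = -(Real.log x * Real.exp (-x)) - L * Real.exp (-x) := by
    intro x _; ring
  rw [setIntegral_congr_fun measurableSet_Ioi h1]
  have hi1 : Integrable (fun x : ℝ => -(Real.log x * Real.exp (-x)))
      (MeasureTheory.volume.restrict (Ioi 0)) := integrableOn_log_mul_exp.neg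
  have hi2 : Integrable (fun x : ℝ => L * Real.exp (-x))
      (MeasureTheory.volume.restrict (Ioi 0)) := exp_neg_integrable.const_mul L
  rw [integral_sub hi1 hi2, integral_neg, integral_log_mul_exp, integral_const_mul,
    integral_exp_neg_Ioi 0]
  simp

lemma gumbel_key (hr0 : 0 < r) (hr1 : r ≤ 1) :
    Integrable (fun t : ℝ => t * Real.exp (-((1-r)/r * Real.exp (-(t + γc))))) gumbel ∧
    ∫ t, t * Real.exp (-((1-r)/r * Real.exp (-(t + γc)))) ∂gumbel = -(r * Real.log r) := by
  have hEq : ∀ u ∈ Ioi (0:ℝ),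
      (gphi u * Real.exp (-((1-r)/r * Real.exp (-(gphi u + γc))))) * Real.exp (-u)
      = (-Real.log u - γc) * Real.exp (-(1/r) * u) := by
    intro u hu
    have hu0 : (0:ℝ) < u := hu
    have h1 : Real.exp (-(gphi u + γc)) = u := by
      rw [gphi, show -(-Real.log u - γc + γc) = Real.log u by ring, Real.exp_log hu0]
    rw [h1, gphi, mul_assoc, ← Real.exp_add]
    have h3 : -((1-r)/r * u) + -u = -(1/r) * u := by field_simp; ring
    rw [h3]
  constructor
  · rw [gumbel_integrable_iff (key_integrand_measurable r)]
    refine (integrable_congr ?_).2 (key_integrableOn hr0 hr1)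
    filter_upwards [ae_restrict_mem measurableSet_Ioi] with u hu
    exact hEq u hu
  · rw [gumbel_integral_eq (key_integrand_measurable r),
      setIntegral_congr_fun measurableSet_Ioi hEq]
    have hscale : (∫ x in Ioi (0:ℝ), (-Real.log (r*x) - γc) * Real.exp (-(1/r)*(r*x)))
        = r⁻¹ • ∫ u in Ioi (0:ℝ), (-Real.log u - γc) * Real.exp (-(1/r)*u) := by
      simpa using integral_comp_mul_left_Ioi
        (fun u : ℝ => (-Real.log u - γc) * Real.exp (-(1/r) * u)) 0 hr0
    have h2 : ∀ x ∈ Ioi (0:ℝ),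
        (-Real.log (r * x) - γc) * Real.exp (-(1/r) * (r * x))
        = (-Real.log x - (Real.log r + γc)) * Real.exp (-x) := by
      intro x hx
      have hx0 : (0:ℝ) < x := hx
      rw [Real.log_mul (ne_of_gt hr0) (ne_of_gt hx0)]
      have : -(1/r) * (r * x) = -x := by field_simp
      rw [this]
      ring
    rw [setIntegral_congr_fun measurableSet_Ioi h2, aux_exp_integral] at hscale
    have hval : ∫ u in Ioi (0:ℝ), (-Real.log u - γc) * Real.exp (-(1/r) * u)
        = r * (γc - (Real.log r + γc)) := by
      rw [hscale, smul_eq_mul]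
      field_simp
    rw [hval]
    ring
end S4
section S5
open MeasureTheory Real Set Filter Function
open scoped ENNReal NNReal

variable {A : Type} [Fintype A]

/-- strict argmax set -/
def Emax (p : A → ℝ) (a : A) : Set (A → ℝ) :=
  {g | ∀ b, b ≠ a → Real.log (p b) + g b < Real.log (p a) + g a}

noncomputable def muA (A : Type) [Fintype A] : Measure (A → ℝ) :=
  Measure.pi fun _ => gumbel

noncomputable def FA (p : A → ℝ) : (A → ℝ) → ℝ :=
  fun g => ∑ a, (Emax p a).indicator (fun h => h a) g

lemma measurableSet_Emax (p : A → ℝ) (a : A) : MeasurableSet (Emax p a) := by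
  have h : Emax p a = ⋂ b, ⋂ (_ : b ≠ a),
      {g : A → ℝ | Real.log (p b) + g b < Real.log (p a) + g a} := by
    ext g; simp [Emax]
  rw [h]
  refine MeasurableSet.iInter fun b => MeasurableSet.iInter fun _ => ?_
  exact measurableSet_lt (measurable_const.add (measurable_pi_apply b))
    (measurable_const.add (measurable_pi_apply a))

lemma measurable_FA (p : A → ℝ) : Measurable (FA p) := by
  refine Finset.measurable_sum _ fun a _ => ?_
  exact (measurable_pi_apply a).indicator (measurableSet_Emax p a)

lemma pmap_eval_pi {ι : Type*} [Fintype ι] {α : ι → Type*} [∀ i, MeasurableSpace (α i)]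
    (μ : ∀ i, Measure (α i)) [∀ i, IsProbabilityMeasure (μ i)] (i : ι) :
    (Measure.pi μ).map (Function.eval i) = μ i := by
  classical
  refine Measure.ext fun s hs => ?_
  rw [Measure.map_apply (measurable_pi_apply i) hs, Set.eval_preimage, Measure.pi_pi]
  rw [Fintype.prod_eq_single i (fun j hj => by
    rw [Function.update_of_ne hj]; exact measure_univ)]
  rw [Function.update_self]

lemma integrable_id_gumbel : Integrable (fun t : ℝ => t) gumbel := by
  have h := (gumbel_key one_pos le_rfl).1
  have he : ∀ t : ℝ, t * Real.exp (-((1-1)/1 * Real.exp (-(t + γc)))) = t := by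
    intro t; norm_num
  simpa [he] using h

lemma integrable_eval (a : A) : Integrable (fun g : A → ℝ => g a) (muA A) := by
  have h1 : Integrable (fun x : ℝ => x)
      (Measure.map (Function.eval a) (Measure.pi fun _ : A => gumbel)) := by
    rw [pmap_eval_pi]; exact integrable_id_gumbel
  have h2 := (integrable_map_measure (μ := Measure.pi fun _ : A => gumbel)
    (f := Function.eval a) (g := fun x : ℝ => x)
    measurable_id'.aestronglyMeasurable (measurable_pi_apply a).aemeasurable).1 h1
  exact h2

lemma norm_indicator_eval_le (p : A → ℝ) (a : A) (g : A → ℝ) :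
    ‖(Emax p a).indicator (fun h => h a) g‖ ≤ ‖g a‖ := by
  by_cases hg : g ∈ Emax p a
  · rw [Set.indicator_of_mem hg]
  · rw [Set.indicator_of_notMem hg]; simp

lemma integrable_indicator_eval (p : A → ℝ) (a : A) :
    Integrable ((Emax p a).indicator (fun h => h a)) (muA A) := by
  refine Integrable.mono' (integrable_eval a).norm
    ((measurable_pi_apply a).indicator (measurableSet_Emax p a)).aestronglyMeasurable ?_
  exact Filter.Eventually.of_forall (norm_indicator_eval_le p a)

lemma K_lemma (p : A → ℝ) (hpos : ∀ a, 0 < p a) (hsum : ∑ a, p a = 1) (a : A) :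
    ∫ g, (Emax p a).indicator (fun h => h a) g ∂(muA A)
      = -(p a * Real.log (p a)) := by
  classical
  letI iF1 : Fintype {x : A // x = a} := Subtype.fintype _
  letI iF2 : Fintype {x : A // ¬x = a} := Subtype.fintype _
  have hr0 : 0 < p a := hpos a
  have hr1 : p a ≤ 1 := by
    have h := Finset.single_le_sum (f := p) (fun b _ => (hpos b).le) (Finset.mem_univ a)
    linarith [hsum ▸ h]
  set r := p a with hr
  let e := MeasurableEquiv.piEquivPiSubtypeProd (fun _ : A => ℝ) (· = a)
  have mp := measurePreserving_piEquivPiSubtypeProd (fun _ : A => gumbel) (· = a)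
  have hf : ((Emax p a).indicator (fun h => h a)) = ((Emax p a).indicator (fun h => h a)) := rfl
  set f : (A → ℝ) → ℝ := (Emax p a).indicator (fun h => h a) with hf
  have hfmeas : Measurable f :=
    (measurable_pi_apply a).indicator (measurableSet_Emax p a)
  have hfint : Integrable f (muA A) := integrable_indicator_eval p a
  -- transfer to the product
  have htrans := (mp.symm).integral_comp' f
  show (∫ g, f g ∂(Measure.pi fun _ : A => gumbel)) = -(p a * Real.log (p a))
  rw [← htrans]
  have hint2 := ((mp.symm).integrable_comp_emb
    (MeasurableEquiv.measurableEmbedding _) (g := f)).2 hfint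
  rw [MeasureTheory.integral_prod _ (by exact hint2)]
  show (∫ y : {x : A // x = a} → ℝ, ∫ z : {x : A // ¬x = a} → ℝ,
      f (e.symm (y, z)) ∂(Measure.pi fun _ => gumbel) ∂(Measure.pi fun _ => gumbel))
      = -(p a * Real.log (p a))
  -- inner integral
  have hinner : ∀ y : {b : A // b = a} → ℝ,
      ∫ z, f (e.symm (y, z)) ∂(Measure.pi fun _ : {b : A // ¬b = a} => gumbel)
        = (y ⟨a, rfl⟩) * Real.exp (-((1-r)/r * Real.exp (-(y ⟨a, rfl⟩ + γc)))) := by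
    intro y
    set t := y ⟨a, rfl⟩ with ht
    set P2 : Measure ({b : A // ¬b = a} → ℝ) := Measure.pi fun _ => gumbel with hP2
    set S : Set ({b : A // ¬b = a} → ℝ) :=
      Set.pi Set.univ (fun b => Iio (Real.log (p a) + t - Real.log (p (b:A)))) with hS
    have hSm : MeasurableSet S := MeasurableSet.univ_pi fun b => measurableSet_Iio
    have hfeq : (fun z => f (e.symm (y, z))) = S.indicator (fun _ => t) := by
      funext z
      have hsymm : ∀ b : A, e.symm (y, z) b = if h : b = a then y ⟨b, h⟩ else z ⟨b, h⟩ := by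
        intro b; rfl
      have hval : e.symm (y, z) a = t := by
        rw [hsymm a, dif_pos rfl]
      by_cases hzm : e.symm (y, z) ∈ Emax p a
      · rw [hf]
        rw [Set.indicator_of_mem hzm, Set.indicator_of_mem, hval]
        · intro b _
          have hb := hzm (b:A) b.2
          rw [hsymm (b:A), dif_neg b.2, hval] at hb
          simp only [mem_Iio]
          linarith
      · rw [hf, Set.indicator_of_notMem hzm, Set.indicator_of_notMem]
        intro hzS
        apply hzm
        intro b hb
        have := hzS ⟨b, hb⟩ (Set.mem_univ _)
        simp only [mem_Iio] at this
        rw [hsymm b, dif_neg hb, hval]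
        linarith
    rw [hfeq, MeasureTheory.integral_indicator_const t hSm]
    have hP2S : P2 S = ∏ b : {b : A // ¬b = a},
        ENNReal.ofReal (Real.exp (-Real.exp (-(Real.log (p a) + t - Real.log (p (b:A)) + γc)))) := by
      rw [hP2, hS, Measure.pi_pi]
      exact Finset.prod_congr rfl fun b _ => gumbel_Iio _
    have hsub : ∑ b : {b : A // ¬b = a}, p (b:A) = 1 - p a := by
      have h1 : ∑ b : {b : A // ¬b = a}, p (b:A)
          = ∑ b ∈ Finset.univ.filter (fun b => ¬b = a), p b :=
        (Finset.sum_subtype (Finset.univ.filter (fun b => ¬b = a)) (fun x => by simp) p).symm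
      have h2 : Finset.univ.filter (fun b => ¬b = a) = Finset.univ.erase a := by
        ext b; simp [Finset.mem_erase, and_comm]
      have h3 := Finset.sum_erase_add Finset.univ p (Finset.mem_univ a)
      rw [h1, h2]
      linarith [hsum ▸ h3]
    have hsumexp : ∑ b : {b : A // ¬b = a},
        Real.exp (-(Real.log (p a) + t - Real.log (p (b:A)) + γc))
        = (1-r)/r * Real.exp (-(t + γc)) := by
      have : ∀ b : {b : A // ¬b = a},
          Real.exp (-(Real.log (p a) + t - Real.log (p (b:A)) + γc))
          = p (b:A) * ((p a)⁻¹ * Real.exp (-(t + γc))) := by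
        intro b
        rw [show -(Real.log (p a) + t - Real.log (p (b:A)) + γc)
            = Real.log (p (b:A)) + (-(Real.log (p a)) + -(t + γc)) by ring]
        rw [Real.exp_add, Real.exp_log (hpos _), Real.exp_add, Real.exp_neg,
          Real.exp_log (hpos a)]
      rw [Finset.sum_congr rfl fun b _ => this b, ← Finset.sum_mul, hsub]
      field_simp
      rw [← hr, mul_div_assoc, div_self hr0.ne', mul_one]
    have hP2S' : (P2 S).toReal = Real.exp (-((1-r)/r * Real.exp (-(t + γc)))) := by
      rw [hP2S, ENNReal.toReal_prod]
      rw [Finset.prod_congr rfl fun b _ => ENNReal.toReal_ofReal (Real.exp_pos _).le]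
      rw [← Real.exp_sum]
      rw [show ∑ b : {b : A // ¬b = a}, -Real.exp (-(Real.log (p a) + t - Real.log (p (b:A)) + γc))
          = -∑ b : {b : A // ¬b = a}, Real.exp (-(Real.log (p a) + t - Real.log (p (b:A)) + γc))
        from Finset.sum_neg_distrib _]
      rw [hsumexp]
    rw [measureReal_def, hP2S', smul_eq_mul, mul_comm]
  rw [integral_congr_ae (Filter.Eventually.of_forall hinner)]
  -- outer integral
  haveI hu : Unique {b : A // b = a} := ⟨⟨⟨a, rfl⟩⟩, fun x => Subtype.ext x.2⟩
  have hd : (⟨a, rfl⟩ : {b : A // b = a}) = default := Subsingleton.elim _ _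
  simp only [hd]
  have hmap : Measure.map (Function.eval (default : {b : A // b = a}))
      (Measure.pi fun _ : {b : A // b = a} => gumbel) = gumbel :=
    pmap_eval_pi _ _
  have hout := integral_map (μ := Measure.pi fun _ : {b : A // b = a} => gumbel)
    (φ := Function.eval (default : {b : A // b = a}))
    (measurable_pi_apply _).aemeasurable
    (f := fun s : ℝ => s * Real.exp (-((1-r)/r * Real.exp (-(s + γc)))))
    (by rw [hmap]; exact (key_integrand_measurable r).aestronglyMeasurable)
  rw [hmap] at hout
  exact hout.symm.trans ((gumbel_key hr0 hr1).2)
end S5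
section S6
open MeasureTheory Real Set Filter Function
open scoped ENNReal NNReal

variable {A : Type} [Fintype A]

lemma tie_null_pair (c1 c2 : ℝ) {b b' : A} (h : ¬ b' = b) :
    muA A {g : A → ℝ | c1 + g b = c2 + g b'} = 0 := by
  classical
  letI iF1 : Fintype {x : A // x = b} := Subtype.fintype _
  letI iF2 : Fintype {x : A // ¬x = b} := Subtype.fintype _
  let e := MeasurableEquiv.piEquivPiSubtypeProd (fun _ : A => ℝ) (· = b)
  have mp := measurePreserving_piEquivPiSubtypeProd (fun _ : A => gumbel) (· = b)
  set E' : Set (({x : A // x = b} → ℝ) × ({x : A // ¬x = b} → ℝ)) :=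
    {w | c1 + w.1 ⟨b, rfl⟩ = c2 + w.2 ⟨b', h⟩} with hE'
  have hE'm : MeasurableSet E' := measurableSet_eq_fun
    (measurable_const.add (measurable_fst.eval))
    (measurable_const.add (measurable_snd.eval))
  have hpre : {g : A → ℝ | c1 + g b = c2 + g b'} = e ⁻¹' E' := rfl
  show (Measure.pi fun _ : A => gumbel) {g : A → ℝ | c1 + g b = c2 + g b'} = 0
  rw [hpre, mp.measure_preimage hE'm.nullMeasurableSet, Measure.prod_apply hE'm]
  have hslice : ∀ y : {x : A // x = b} → ℝ,
      (Prod.mk y ⁻¹' E')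
        = {z : {x : A // ¬x = b} → ℝ | z ⟨b', h⟩ = c1 + y ⟨b, rfl⟩ - c2} := by
    intro y; ext z
    simp only [Set.mem_preimage, Set.mem_setOf_eq, hE']
    constructor <;> intro hh <;> linarith
  have hz : ∀ y : {x : A // x = b} → ℝ,
      (Measure.pi fun _ : {x : A // ¬x = b} => gumbel) (Prod.mk y ⁻¹' E') = 0 := by
    intro y
    rw [hslice y]
    exact Measure.pi_hyperplane _ _ _
  simp only [hz, lintegral_zero]

def Ties (p : A → ℝ) : Set (A → ℝ) :=
  {g | ∃ b b', b ≠ b' ∧ Real.log (p b) + g b = Real.log (p b') + g b'}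

lemma ties_null (p : A → ℝ) : muA A (Ties p) = 0 := by
  have hsub : Ties p ⊆ ⋃ b, ⋃ b', ⋃ (_ : b ≠ b'),
      {g : A → ℝ | Real.log (p b) + g b = Real.log (p b') + g b'} := by
    rintro g ⟨b, b', hbb, hEq⟩
    exact Set.mem_iUnion.2 ⟨b, Set.mem_iUnion.2 ⟨b', Set.mem_iUnion.2 ⟨hbb, hEq⟩⟩⟩
  refine measure_mono_null hsub ?_
  refine measure_iUnion_null fun b => measure_iUnion_null fun b' =>
    measure_iUnion_null fun hbb => ?_
  exact tie_null_pair _ _ (fun hc => hbb (hc.symm))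

lemma pick_FA (p : A → ℝ) (g : A → ℝ) (hnt : g ∉ Ties p) (a0 : A)
    (hmax : ∀ b, Real.log (p b) + g b ≤ Real.log (p a0) + g a0) :
    FA p g = g a0 := by
  have hmem : g ∈ Emax p a0 := by
    intro b hb
    rcases lt_or_eq_of_le (hmax b) with hlt | heq
    · exact hlt
    · exact absurd ⟨b, a0, hb, heq⟩ hnt
  rw [FA, Finset.sum_eq_single a0]
  · rw [Set.indicator_of_mem hmem]
  · intro c _ hc
    rw [Set.indicator_of_notMem]
    intro hcm
    have h1 := hcm a0 (fun hh => hc hh.symm)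
    have h2 := hmax c
    linarith
  · intro h; exact absurd (Finset.mem_univ a0) h

lemma FA_integrable (p : A → ℝ) : Integrable (FA p) (muA A) :=
  integrable_finset_sum _ fun a _ => integrable_indicator_eval p a

lemma FA_integral (p : A → ℝ) (hpos : ∀ a, 0 < p a) (hsum : ∑ a, p a = 1) :
    ∫ g, FA p g ∂(muA A) = -∑ a, p a * Real.log (p a) := by
  have h : ∫ g, FA p g ∂(muA A)
      = ∑ a, ∫ g, (Emax p a).indicator (fun h => h a) g ∂(muA A) := by
    simp only [FA]
    exact integral_finset_sum _ fun a _ => integrable_indicator_eval p a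
  rw [h, Finset.sum_congr rfl fun a _ => K_lemma p hpos hsum a]
  rw [← Finset.sum_neg_distrib]

end S6

end Aux

/-- For a product distribution `p(x) = Πᵢ pᵢ(xᵢ)` there is a potential
(namely `θ(x) = Σᵢ log pᵢ(xᵢ)`) for which the perturb-max entropy bound is
tight: `H(p) = E_γ [Σᵢ γᵢ(x^γ_i)]`. -/
theorem stmt_9 {n : ℕ} {X : Fin n → Type} [∀ i, Fintype (X i)] [∀ i, Nonempty (X i)]
    (p : ∀ i, X i → ℝ) (hpos : ∀ i, ∀ a : X i, 0 < p i a)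
    (hsum : ∀ i, ∑ a : X i, p i a = 1) :
    ∃ θ : (∀ i, X i) → ℝ,
      (θ = fun x => ∑ i : Fin n, Real.log (p i (x i))) ∧
      ∀ xstar : (∀ i, X i → ℝ) → ∀ i, X i,
        (∀ γ : ∀ i, X i → ℝ, ∀ x : ∀ i, X i,
          θ x + ∑ i : Fin n, γ i (x i)
            ≤ θ (xstar γ) + ∑ i : Fin n, γ i (xstar γ i)) →
        (-∑ x : ∀ i, X i, (∏ i : Fin n, p i (x i)) *
            Real.log (∏ i : Fin n, p i (x i)))
          = ∫ γ : ∀ i, X i → ℝ, (∑ i : Fin n, γ i (xstar γ i))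
              ∂(Measure.pi fun i => Measure.pi fun _ : X i => gumbel) := by
  classical
  refine ⟨fun x => ∑ i : Fin n, Real.log (p i (x i)), rfl, ?_⟩
  intro xstar hx
  set μ : Measure (∀ i, X i → ℝ) := Measure.pi fun i => Measure.pi fun _ : X i => gumbel
    with hμ
  -- coordinatewise argmax property
  have hcoord : ∀ γ : ∀ i, X i → ℝ, ∀ i, ∀ b : X i,
      Real.log (p i b) + γ i b
        ≤ Real.log (p i (xstar γ i)) + γ i (xstar γ i) := by
    intro γ i b
    set u := Function.update (xstar γ) i b with hu
    have h := hx γ u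
    have hL : (∑ j, Real.log (p j (u j))) + ∑ j, γ j (u j)
        = ∑ j, (Real.log (p j (u j)) + γ j (u j)) := Finset.sum_add_distrib.symm
    have hR : (∑ j, Real.log (p j (xstar γ j))) + ∑ j, γ j (xstar γ j)
        = ∑ j, (Real.log (p j (xstar γ j)) + γ j (xstar γ j)) := Finset.sum_add_distrib.symm
    rw [hL, hR] at h
    set f : Fin n → ℝ := fun j => Real.log (p j (u j)) + γ j (u j) with hf
    set g : Fin n → ℝ := fun j => Real.log (p j (xstar γ j)) + γ j (xstar γ j) with hg
    have h1 : f i + ∑ j ∈ Finset.univ.erase i, f j = ∑ j, f j :=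
      Finset.add_sum_erase _ _ (Finset.mem_univ i)
    have h2 : g i + ∑ j ∈ Finset.univ.erase i, g j = ∑ j, g j :=
      Finset.add_sum_erase _ _ (Finset.mem_univ i)
    have h3 : ∑ j ∈ Finset.univ.erase i, f j = ∑ j ∈ Finset.univ.erase i, g j := by
      refine Finset.sum_congr rfl fun j hj => ?_
      have hji : j ≠ i := Finset.ne_of_mem_erase hj
      rw [hf, hg]
      simp only [hu, Function.update_of_ne hji]
    have h4 : f i = Real.log (p i b) + γ i b := by
      rw [hf]; simp only [hu, Function.update_self]
    have h5 : g i = Real.log (p i (xstar γ i)) + γ i (xstar γ i) := rfl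
    rw [← h1, ← h2, h3] at h
    rw [← h4, ← h5]
    linarith
  -- a.e. equality with canonical argmax functional
  have hB : μ (⋃ i, Function.eval i ⁻¹' (Ties (p i))) = 0 := by
    refine measure_iUnion_null fun i => ?_
    exact Measure.pi_eval_preimage_null _ (ties_null (p i))
  have hae : ∀ᵐ γ ∂μ, (∑ i, γ i (xstar γ i)) = ∑ i, FA (p i) (γ i) := by
    have h0 : ∀ᵐ γ ∂μ, γ ∉ ⋃ i, Function.eval i ⁻¹' (Ties (p i)) :=
      (measure_eq_zero_iff_ae_notMem.1 hB)
    filter_upwards [h0] with γ hγ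
    refine Finset.sum_congr rfl fun i _ => ?_
    have hnt : γ i ∉ Ties (p i) := fun hmem => hγ (Set.mem_iUnion.2 ⟨i, hmem⟩)
    exact (pick_FA (p i) (γ i) hnt (xstar γ i) (hcoord γ i)).symm
  -- integrability of each summand
  have hint : ∀ i, Integrable (fun γ : ∀ j, X j → ℝ => FA (p i) (γ i)) μ := by
    intro i
    have hmap : Measure.map (Function.eval i) μ = Measure.pi fun _ : X i => gumbel :=
      pmap_eval_pi _ i
    have h1 : Integrable (FA (p i)) (Measure.map (Function.eval i) μ) := by
      rw [hmap]; exact FA_integrable (p i)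
    exact (integrable_map_measure (measurable_FA (p i)).aestronglyMeasurable
      (measurable_pi_apply i).aemeasurable).1 h1
  -- value of each summand
  have hval : ∀ i, ∫ γ, FA (p i) (γ i) ∂μ = -∑ a : X i, p i a * Real.log (p i a) := by
    intro i
    have hmap : Measure.map (Function.eval i) μ = Measure.pi fun _ : X i => gumbel :=
      pmap_eval_pi _ i
    have h2 := integral_map (φ := Function.eval i) (μ := μ)
      (measurable_pi_apply i).aemeasurable
      (f := FA (p i)) (by rw [hmap]; exact (measurable_FA (p i)).aestronglyMeasurable)
    rw [hmap] at h2
    exact h2.symm.trans (FA_integral (p i) (hpos i) (hsum i))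
  -- RHS computation
  have hRHS : ∫ γ, (∑ i, γ i (xstar γ i)) ∂μ
      = ∑ i, -(∑ a : X i, p i a * Real.log (p i a)) := by
    rw [integral_congr_ae hae, integral_finset_sum _ fun i _ => hint i]
    exact Finset.sum_congr rfl fun i _ => (hval i).trans (by ring)
  rw [hRHS]
  -- LHS computation
  have hlog : ∀ x : ∀ i, X i, Real.log (∏ i, p i (x i)) = ∑ i, Real.log (p i (x i)) :=
    fun x => Real.log_prod (fun i _ => (hpos i (x i)).ne')
  have hstep1 : (∑ x : ∀ i, X i, (∏ i, p i (x i)) * Real.log (∏ i, p i (x i)))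
      = ∑ i : Fin n, ∑ x : ∀ i, X i, (∏ j, p j (x j)) * Real.log (p i (x i)) := by
    rw [show (∑ x : ∀ i, X i, (∏ i, p i (x i)) * Real.log (∏ i, p i (x i)))
        = ∑ x : ∀ i, X i, ∑ i, (∏ j, p j (x j)) * Real.log (p i (x i)) from
      Finset.sum_congr rfl fun x _ => by rw [hlog x, Finset.mul_sum]]
    exact Finset.sum_comm
  have hinner : ∀ i : Fin n, (∑ x : ∀ i, X i, (∏ j, p j (x j)) * Real.log (p i (x i)))
      = ∑ a : X i, p i a * Real.log (p i a) := by
    intro i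
    set f : ∀ j, X j → ℝ := fun j a => p j a * (if j = i then Real.log (p j a) else 1)
      with hfdef
    have hprod : ∀ x : ∀ i, X i,
        (∏ j, f j (x j)) = (∏ j, p j (x j)) * Real.log (p i (x i)) := by
      intro x
      rw [hfdef]
      rw [show (∏ j, p j (x j) * (if j = i then Real.log (p j (x j)) else 1))
          = (∏ j, p j (x j)) * ∏ j, (if j = i then Real.log (p j (x j)) else 1) from
        Finset.prod_mul_distrib]
      congr 1
      rw [Finset.prod_ite_eq' Finset.univ i (fun j => Real.log (p j (x j)))]
      simp
    have hexch := Finset.prod_univ_sum (fun j => (Finset.univ : Finset (X j))) f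
    rw [Fintype.piFinset_univ] at hexch
    have hS : ∀ j, (∑ a : X j, f j a)
        = if j = i then ∑ a : X i, p i a * Real.log (p i a) else 1 := by
      intro j
      by_cases hj : j = i
      · subst hj; simp [hfdef]
      · simp [hfdef, hj, hsum j]
    rw [Finset.sum_congr rfl fun x _ => (hprod x).symm, ← hexch,
      Finset.prod_congr rfl fun j _ => hS j,
      Finset.prod_ite_eq' Finset.univ i
        (fun _ => ∑ a : X i, p i a * Real.log (p i a))]
    simp
  rw [hstep1, Finset.sum_congr rfl fun i _ => hinner i, ← Finset.sum_neg_distrib]
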